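/- Let E be an expression with normalization level k and weight w > 1. Then α_k is defined at E, and the expression α_k(E) either has normalization level strictly greater than k, or has normalization level equal to k and weight strictly less than w. -/
import Mathlib


/-- Binary trees: expressions in a category with multiplication. -/
inductive BT : Type
  | leaf : BT
  | node : BT → BT → BT
deriving DecidableEq

namespace BT

/-- number of leaves (variables) of an expression -/
def leaves : BT → ℕ
  | leaf => 1
  | node l r => leaves l + leaves r

/-- `stab i t` is `t` right-stabilized `i` times: `(t ⊗_i I)`. -/
def stab : ℕ → BT → BT
  | 0, t => t
  | n+1, t => node (stab n t) leaf

/-- semi-normalized: of the form `(F ⊗ I)` -/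
def IsSemi (t : BT) : Prop := ∃ f, t = node f leaf

/-- fully normalized: a left comb, i.e. an iterated right stabilization of `I` -/
def IsComb (t : BT) : Prop := ∃ n, t = stab n leaf

/-- The move `α_i`: `α_0` reassociates `(H ⊗ (K ⊗ L))` to `((H ⊗ K) ⊗ L)` at the
root, and `α_{i+1} (N ⊗ I) = (α_i N) ⊗ I`. -/
inductive Alpha : ℕ → BT → BT → Prop
  | base (H K L : BT) : Alpha 0 (node H (node K L)) (node (node H K) L)
  | step {i N N'} : Alpha i N N' → Alpha (i+1) (node N leaf) (node N' leaf)

end BT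

/-- `E` has normalization level `k`: either `E` is fully normalized with `k`
leaves, or `E = (N ⊗_k I)` with `N` not semi-normalized. -/
def BT.NormLevel (E : BT) (k : ℕ) : Prop :=
  (BT.IsComb E ∧ k = E.leaves) ∨
    (¬ BT.IsComb E ∧ ∃ N, ¬ BT.IsSemi N ∧ E = BT.stab k N)

/-- `E` has normalization level `k` and weight `w > 1`:
`E = ((F ⊗ G) ⊗_k I)` with `(F ⊗ G)` not semi-normalized and `w` the number of
leaves of `G`. -/
def BT.LevelWeight (E : BT) (k w : ℕ) : Prop :=
  ∃ F G, ¬ BT.IsSemi (BT.node F G) ∧ E = BT.stab k (BT.node F G) ∧ w = G.leaves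

namespace BT

lemma leaves_pos (t : BT) : 0 < t.leaves := by
  induction t with
  | leaf => simp [leaves]
  | node l r ihl ihr => simp [leaves]; omega

lemma stab_node_leaf (m : ℕ) (t : BT) : stab m (node t leaf) = stab (m+1) t := by
  induction m with
  | zero => rfl
  | succ n ih => simp [stab, ih]

lemma alpha_stab (k : ℕ) (H K L : BT) :
    Alpha k (stab k (node H (node K L))) (stab k (node (node H K) L)) := by
  induction k with
  | zero => exact Alpha.base H K L
  | succ n ih => exact Alpha.step ih

lemma leaves_stab (n : ℕ) (t : BT) : (stab n t).leaves = t.leaves + n := by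
  induction n with
  | zero => rfl
  | succ n ih => simp [stab, leaves, ih]; omega

lemma isComb_of_stab {m : ℕ} {t : BT} (h : IsComb (stab m t)) : IsComb t := by
  induction m with
  | zero => exact h
  | succ n ih =>
    obtain ⟨j, hj⟩ := h
    cases j with
    | zero => simp [stab] at hj
    | succ j' =>
      simp only [stab] at hj
      exact ih ⟨j', by injection hj⟩

lemma not_isComb_stab_node_node (m : ℕ) (a x y : BT) :
    ¬ IsComb (stab m (node a (node x y))) := by
  intro h
  obtain ⟨n, hn⟩ := isComb_of_stab h
  cases n with
  | zero => simp [stab] at hn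
  | succ n' => simp [stab] at hn

lemma exists_level (t : BT) : ∀ m : ℕ, ∃ k', m ≤ k' ∧ NormLevel (stab m t) k' := by
  induction t with
  | leaf =>
    intro m
    refine ⟨1 + m, by omega, Or.inl ⟨⟨m, rfl⟩, ?_⟩⟩
    simp [leaves_stab, leaves]
  | node a b iha ihb =>
    intro m
    cases b with
    | leaf =>
      rw [stab_node_leaf]
      obtain ⟨k', hk', h⟩ := iha (m+1)
      exact ⟨k', by omega, h⟩
    | node x y =>
      refine ⟨m, le_refl m, Or.inr ⟨not_isComb_stab_node_node m a x y, ?_⟩⟩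
      exact ⟨node a (node x y), by simp [IsSemi], rfl⟩

end BT

/-- If `E` has normalization level `k` and weight `w > 1`, then `α_k` is
defined at `E`, and the target has either larger normalization level, or the
same normalization level and smaller weight. -/
theorem alpha_at_level (k w : ℕ) (E : BT)
    (hE : BT.LevelWeight E k w) (hw : 1 < w) :
    ∃ F, BT.Alpha k E F ∧
      ((∃ k', BT.NormLevel F k' ∧ k < k') ∨
        (∃ w', BT.LevelWeight F k w' ∧ w' < w)) := by
  obtain ⟨F, G, hns, rfl, rfl⟩ := hE
  cases G with
  | leaf => simp [BT.leaves] at hw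
  | node K L =>
    refine ⟨BT.stab k (BT.node (BT.node F K) L), BT.alpha_stab k F K L, ?_⟩
    cases L with
    | leaf =>
      rw [BT.stab_node_leaf]
      obtain ⟨k', hk', h⟩ := BT.exists_level (BT.node F K) (k+1)
      exact Or.inl ⟨k', h, by omega⟩
    | node x y =>
      refine Or.inr ⟨(BT.node x y).leaves,
        ⟨BT.node F K, BT.node x y, by simp [BT.IsSemi], rfl, rfl⟩, ?_⟩
      have := BT.leaves_pos K
      simp [BT.leaves]
      omega
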